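/- Let G = conv{o_1,...,o_{k+1}} ⊆ S where the o_i are affinely independent, and suppose there exist linearly independent vectors b_1,...,b_{k+1} in R^n with b_i ∈ B ∩ C(o_i) for each i. Define f : G → B by f(∑ α_i o_i) = ∑ α_i b_i for convex coefficients α_i. Then f is well-defined, affine, f(x) ≠ 0 for all x in G, and f(x) ∈ C(x) for all x in G. -/

import Mathlib

open Matrix

/-- The set of indices of strictly positive barycentric coordinates of `x`
with respect to the affine basis (simplex vertices) `b`. -/
noncomputable def isupp {n : ℕ} (b : AffineBasis (Fin (n + 1)) ℝ (Fin n → ℝ))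
    (x : Fin n → ℝ) : Set (Fin (n + 1)) :=
  {i | 0 < b.coord i x}

/-- The inward-pointing cone determined by the outward facet normals `h`
and an index set `I`: all constraints `h j ⬝ᵥ y ≤ 0` for `j ∉ I`, `j ≠ 0`
(the exit facet `0` imposes no constraint). -/
def icone {n : ℕ} (h : Fin (n + 1) → Fin n → ℝ) (I : Set (Fin (n + 1))) :
    Set (Fin n → ℝ) :=
  {y | ∀ j : Fin (n + 1), j ≠ 0 → j ∉ I → h j ⬝ᵥ y ≤ 0}

/-- `h j` is an outward normal to the facet of the simplex with vertices `v`
opposite the vertex `v j`, for every `j ≠ 0`. -/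
def IsOutwardNormals {n : ℕ} (v h : Fin (n + 1) → Fin n → ℝ) : Prop :=
  ∀ j : Fin (n + 1), j ≠ 0 →
    (∀ i, i ≠ j → ∀ k, k ≠ j → h j ⬝ᵥ v i = h j ⬝ᵥ v k) ∧
    (∀ i, i ≠ j → h j ⬝ᵥ v j < h j ⬝ᵥ v i)

/-- An affinely independent family with prescribed values extends to an affine map. -/
theorem exists_affineMap_eq {k n : ℕ} (o b : Fin (k + 1) → Fin n → ℝ)
    (ho : AffineIndependent ℝ o) :
    ∃ f : (Fin n → ℝ) →ᵃ[ℝ] (Fin n → ℝ), ∀ i, f (o i) = b i := by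
  classical
  have hg : LinearIndependent ℝ (fun i : {x : Fin (k + 1) // x ≠ 0} => o i -ᵥ o 0) :=
    (affineIndependent_iff_linearIndependent_vsub ℝ o 0).mp ho
  set g : {x : Fin (k + 1) // x ≠ 0} → Fin n → ℝ := fun i => o i - o 0 with hgdef
  have hg' : LinearIndependent ℝ g := hg
  set c : {x : Fin (k + 1) // x ≠ 0} → Fin n → ℝ := fun i => b i - b 0 with hcdef
  have hgsub : LinearIndepOn ℝ id (Set.range g) :=
    hg'.linearIndepOn_id
  set bas := Module.Basis.extend hgsub with hbas
  set φ : hgsub.extend (Set.subset_univ _) → (Fin n → ℝ) := fun x =>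
    if hx : (x : Fin n → ℝ) ∈ Set.range g then c hx.choose else 0 with hφ
  set L := Module.Basis.constr bas ℝ φ with hL
  have hLg : ∀ i, L (g i) = c i := by
    intro i
    have hmem : g i ∈ hgsub.extend (Set.subset_univ _) :=
      hgsub.subset_extend _ ⟨i, rfl⟩
    have hb : bas ⟨g i, hmem⟩ = g i := Module.Basis.extend_apply_self hgsub _
    have : L (bas ⟨g i, hmem⟩) = φ ⟨g i, hmem⟩ := Module.Basis.constr_basis bas ℝ φ _
    rw [hb] at this
    rw [this, hφ]
    have hx : (g i : Fin n → ℝ) ∈ Set.range g := ⟨i, rfl⟩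
    simp only [dif_pos hx]
    have := hx.choose_spec
    have hi : hx.choose = i := hg'.injective this
    rw [hi]
  refine ⟨⟨fun x => L (x - o 0) + b 0, L, ?_⟩, ?_⟩
  · intro p v
    show L ((v + p) - o 0) + b 0 = L v + (L (p - o 0) + b 0)
    have hvp : (v + p) - o 0 = v + (p - o 0) := by abel
    rw [hvp, map_add]
    abel
  · intro i
    by_cases hi : i = 0
    · subst hi; simp
    · show L (o i - o 0) + b 0 = b i
      have := hLg ⟨i, hi⟩
      simp only [hgdef, hcdef] at this
      rw [this]; abel

/-- If `G = conv{o₁,…,o_{k+1}}` with the `oᵢ` affinely independent and there are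
linearly independent `bᵢ ∈ B ∩ C(oᵢ)`, the affine interpolation is a well-defined,
nowhere-vanishing selection satisfying the cone condition. -/
theorem stmt6 {n k : ℕ} (bb : AffineBasis (Fin (n + 1)) ℝ (Fin n → ℝ))
    (h : Fin (n + 1) → Fin n → ℝ) (hout : IsOutwardNormals (⇑bb) h)
    (B : Submodule ℝ (Fin n → ℝ))
    (o : Fin (k + 1) → Fin n → ℝ) (b : Fin (k + 1) → Fin n → ℝ)
    (ho : AffineIndependent ℝ o)
    (hoS : ∀ i, o i ∈ convexHull ℝ (Set.range ⇑bb))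
    (hb : LinearIndependent ℝ b) (hbB : ∀ i, b i ∈ B)
    (hbC : ∀ i, b i ∈ icone h (isupp bb (o i))) :
    ∃ f : (Fin n → ℝ) →ᵃ[ℝ] (Fin n → ℝ), (∀ i, f (o i) = b i) ∧
      ∀ x ∈ convexHull ℝ (Set.range o),
        f x ∈ B ∧ f x ≠ 0 ∧ f x ∈ icone h (isupp bb x) := by
  classical
  obtain ⟨f, hf⟩ := exists_affineMap_eq o b ho
  refine ⟨f, hf, ?_⟩
  intro x hx
  rw [convexHull_range_eq_exists_affineCombination] at hx
  obtain ⟨s, w, hw0, hw1, rfl⟩ := hx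
  have hcoordnn : ∀ j i, 0 ≤ bb.coord j (o i) := by
    intro j i
    have := hoS i
    rw [bb.convexHull_eq_nonneg_coord] at this
    exact this j
  -- f x as a linear combination
  have hfx : f (s.affineCombination ℝ o w) = ∑ i ∈ s, w i • b i := by
    rw [Finset.map_affineCombination s o w hw1,
      Finset.affineCombination_eq_linear_combination _ _ _ hw1]
    exact Finset.sum_congr rfl fun i _ => by rw [Function.comp_apply, hf]
  refine ⟨?_, ?_, ?_⟩
  · rw [hfx]
    exact Submodule.sum_mem B fun i _ => Submodule.smul_mem B _ (hbB i)
  · rw [hfx]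
    intro hzero
    have hzero' : ∑ i, (if i ∈ s then w i else 0) • b i = 0 := by
      rw [← hzero]
      simp only [ite_smul, zero_smul]
      rw [Finset.sum_ite_mem, Finset.univ_inter]
    have := Fintype.linearIndependent_iff.mp hb _ hzero'
    have h1 : ∑ i ∈ s, w i = 0 := by
      refine Finset.sum_eq_zero fun i hi => ?_
      have := this i
      simpa [hi] using this
    rw [hw1] at h1
    exact one_ne_zero h1
  · intro j hj0 hjx
    -- coordinate of x
    have hcoordx : bb.coord j (s.affineCombination ℝ o w) =
        ∑ i ∈ s, w i * bb.coord j (o i) := by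
      rw [Finset.map_affineCombination s o w hw1,
        Finset.affineCombination_eq_linear_combination _ _ _ hw1]
      exact Finset.sum_congr rfl fun i _ => by rw [Function.comp_apply, smul_eq_mul]
    have hle : bb.coord j (s.affineCombination ℝ o w) ≤ 0 :=
      le_of_not_gt (by simpa [isupp] using hjx)
    rw [hcoordx] at hle
    have hterms : ∀ i ∈ s, w i * bb.coord j (o i) = 0 := by
      have hsum0 : ∑ i ∈ s, w i * bb.coord j (o i) = 0 :=
        le_antisymm hle (Finset.sum_nonneg fun i hi =>
          mul_nonneg (hw0 i hi) (hcoordnn j i))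
      exact (Finset.sum_eq_zero_iff_of_nonneg fun i hi =>
        mul_nonneg (hw0 i hi) (hcoordnn j i)).mp hsum0
    rw [hfx]
    have hdot : h j ⬝ᵥ ∑ i ∈ s, w i • b i = ∑ i ∈ s, w i * (h j ⬝ᵥ b i) := by
      simp only [dotProduct, Finset.sum_apply, Pi.smul_apply, smul_eq_mul,
        Finset.mul_sum]
      rw [Finset.sum_comm]
      exact Finset.sum_congr rfl fun i _ => Finset.sum_congr rfl fun a _ => by ring
    rw [hdot]
    refine Finset.sum_nonpos fun i hi => ?_
    rcases eq_or_lt_of_le (hw0 i hi) with heq | hpos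
    · rw [← heq, zero_mul]
    · have hzero : bb.coord j (o i) = 0 := by
        have := hterms i hi
        exact (mul_eq_zero.mp this).resolve_left (ne_of_gt hpos) |>.symm ▸ rfl
      have hjo : j ∉ isupp bb (o i) := by
        simp [isupp, hzero]
      exact mul_nonpos_of_nonneg_of_nonpos hpos.le (hbC i j hj0 hjo)
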